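/- Let X be a complex vector space, Φ ∈ X with Φ ≠ 0, v ∈ X, and let e : ℝ → ℂ be differentiable with e(t) ≠ 0 and |e(t)| = 1 for all t ∈ ℝ. If i e'(t) • Φ = e(t) • v for all t ∈ ℝ, then there exists μ ∈ ℝ such that v = (μ : ℂ) • Φ and e(t) = exp(-i μ (t - t₀)) · e(t₀) for all t, t₀ ∈ ℝ. -/

import Mathlib

theorem separation_of_variables_ansatz
    {X : Type*} [AddCommGroup X] [Module ℂ X]
    (Φ : X) (hΦ : Φ ≠ 0) (v : X) (e : ℝ → ℂ) (e' : ℝ → ℂ)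
    (he : ∀ t : ℝ, HasDerivAt e (e' t) t)
    (hne : ∀ t : ℝ, e t ≠ 0)
    (habs : ∀ t : ℝ, ‖e t‖ = 1)
    (heq : ∀ t : ℝ, (Complex.I * e' t) • Φ = e t • v) :
    ∃ μ : ℝ, v = (μ : ℂ) • Φ ∧
      ∀ t t₀ : ℝ, e t = Complex.exp (-Complex.I * μ * (t - t₀)) * e t₀ := by
  set c : ℂ := Complex.I * e' 0 / e 0 with hc
  have hv : v = c • Φ := by
    have h0 := heq 0
    have : (e 0)⁻¹ • ((Complex.I * e' 0) • Φ) = (e 0)⁻¹ • (e 0 • v) := by rw [h0]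
    rw [smul_smul, smul_smul, inv_mul_cancel₀ (hne 0), one_smul] at this
    rw [← this, hc]
    congr 1
    rw [div_eq_mul_inv]; ring
  -- ODE: e' t = (-I * c) * e t
  have hode : ∀ t : ℝ, e' t = -Complex.I * c * e t := by
    intro t
    have h := heq t
    rw [hv, smul_smul] at h
    have h2 : Complex.I * e' t = e t * c :=
      smul_left_injective ℂ hΦ h
    have h3 := congrArg (fun z => -Complex.I * z) h2
    calc e' t = -Complex.I * (Complex.I * e' t) := by
              rw [show -Complex.I * (Complex.I * e' t) = -(Complex.I * Complex.I) * e' t by ring,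
                Complex.I_mul_I]; ring
      _ = -Complex.I * (e t * c) := h3
      _ = -Complex.I * c * e t := by ring
  -- solve the ODE: e t = exp (-I c (t - t₀)) * e t₀
  have hsol : ∀ t t₀ : ℝ, e t = Complex.exp (-Complex.I * c * (t - t₀)) * e t₀ := by
    intro t t₀
    set g : ℝ → ℂ := fun s => e s * Complex.exp (Complex.I * c * (s - t₀)) with hg
    have hg' : ∀ s : ℝ, HasDerivAt g 0 s := by
      intro s
      have h1 : HasDerivAt (fun s : ℝ => Complex.I * c * (s - t₀)) (Complex.I * c) s := by
        have : HasDerivAt (fun s : ℝ => (s : ℂ) - t₀) 1 s := by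
          simpa using (Complex.ofRealCLM.hasDerivAt (x := s)).sub_const (t₀ : ℂ)
        simpa using this.const_mul (Complex.I * c)
      have h2 : HasDerivAt (fun s : ℝ => Complex.exp (Complex.I * c * (s - t₀)))
          (Complex.exp (Complex.I * c * (s - t₀)) * (Complex.I * c)) s := h1.cexp
      have h3 := (he s).mul h2
      have : e' s * Complex.exp (Complex.I * c * (s - t₀))
          + e s * (Complex.exp (Complex.I * c * (s - t₀)) * (Complex.I * c)) = 0 := by
        rw [hode s]; ring
      rw [this] at h3; exact h3
    have hgc : g t = g t₀ := by
      apply is_const_of_deriv_eq_zero (fun s => (hg' s).differentiableAt)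
      intro s; exact (hg' s).deriv
    have hgt₀ : g t₀ = e t₀ := by simp [hg]
    have : e t * Complex.exp (Complex.I * c * (t - t₀)) = e t₀ := by
      rw [← hgt₀]; exact hgc
    have := congrArg (fun z => z * Complex.exp (-Complex.I * c * (t - t₀))) this
    rw [mul_assoc, ← Complex.exp_add] at this
    have harg : Complex.I * c * (t - t₀) + -Complex.I * c * (t - t₀) = 0 := by ring
    rw [harg, Complex.exp_zero, mul_one] at this
    rw [this]; ring
  -- c is real
  have hcim : c.im = 0 := by
    have h1 := habs 1
    have h0 := habs 0
    rw [hsol 1 0] at h1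
    rw [norm_mul, h0, mul_one, Complex.norm_exp] at h1
    have hre : (-Complex.I * c * ((1 : ℝ) - (0 : ℝ))).re = c.im := by
      simp [Complex.mul_re, Complex.mul_im]
    rw [hre] at h1
    exact Real.exp_injective (h1.trans Real.exp_zero.symm)
  have hcre : ((c.re : ℂ)) = c := Complex.ext (by simp) (by simp [hcim])
  refine ⟨c.re, ?_, ?_⟩
  · rw [hv, hcre]
  · intro t t₀
    rw [hsol t t₀, hcre]
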